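/- Let f : ℝ → (n×n real matrices → n×n real matrices) be such that f_t satisfies the linear group property on G for every t, and for each t let A_t be a linear map on n×n matrices preserving 𝔤 with f_t(exp(v)) − A_t(v) = o(‖v‖) as v → 0 with v ∈ 𝔤 (i.e., A_t is the differential at 0 of v ↦ exp(v)⁻¹·f_t(exp(v)) along 𝔤). If x : ℝ → 𝔤 is a differentiable curve solving the linear ordinary differential equation dx_t/dt = A_t(x_t), then the curve X_t := exp(x_t) in G is differentiable with dX_t/dt = f_t(X_t); that is, trajectories of a linear group system are exponentials of trajectories of the linear system dx/dt = A_t x in the Lie algebra. (Proposition 1, equivalence of (i) and (iii).) -/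

import Mathlib

open NormedSpace

attribute [local instance] Matrix.normedAddCommGroup Matrix.normedSpace

/-- `f` satisfies the linear group property on `G`:
`f (X*Y) = f X * Y + X * f Y` for all `X, Y ∈ G`. -/
def LinearGroupProp {n : ℕ} (G : Set (Matrix (Fin n) (Fin n) ℝ))
    (f : Matrix (Fin n) (Fin n) ℝ → Matrix (Fin n) (Fin n) ℝ) : Prop :=
  ∀ X ∈ G, ∀ Y ∈ G, f (X * Y) = f X * Y + X * f Y

/-- `f` satisfies the affine group property on `G`:
`f (X*Y) = f X * Y + X * f Y - X * f 1 * Y` for all `X, Y ∈ G`. -/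
def AffineGroupProp {n : ℕ} (G : Set (Matrix (Fin n) (Fin n) ℝ))
    (f : Matrix (Fin n) (Fin n) ℝ → Matrix (Fin n) (Fin n) ℝ) : Prop :=
  ∀ X ∈ G, ∀ Y ∈ G, f (X * Y) = f X * Y + X * f Y - X * f 1 * Y

/-- `G` is a matrix Lie group: a closed subgroup of the group of invertible `n × n`
real matrices. -/
structure IsMatrixLieGroup {n : ℕ} (G : Set (Matrix (Fin n) (Fin n) ℝ)) : Prop where
  one_mem : (1 : Matrix (Fin n) (Fin n) ℝ) ∈ G
  mul_mem : ∀ {X Y : Matrix (Fin n) (Fin n) ℝ}, X ∈ G → Y ∈ G → X * Y ∈ G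
  isUnit : ∀ {X : Matrix (Fin n) (Fin n) ℝ}, X ∈ G → IsUnit X
  inv_mem : ∀ {X : Matrix (Fin n) (Fin n) ℝ}, X ∈ G → X⁻¹ ∈ G
  closed : IsClosed {A : {M : Matrix (Fin n) (Fin n) ℝ // IsUnit M} |
    (A : Matrix (Fin n) (Fin n) ℝ) ∈ G}

/-- The Lie algebra of the matrix Lie group `G`. -/
def lieAlgebraOf {n : ℕ} (G : Set (Matrix (Fin n) (Fin n) ℝ)) :
    Set (Matrix (Fin n) (Fin n) ℝ) :=
  {x | ∀ t : ℝ, exp (t • x) ∈ G}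

/-! ### Auxiliary lemmas: linear ODE uniqueness in a Banach algebra -/

section GenericODE
variable {𝔸 : Type*} [NormedRing 𝔸] [NormedAlgebra ℝ 𝔸] [NormedAlgebra ℚ 𝔸] [CompleteSpace 𝔸]

lemma aux_ode_zero (v : 𝔸) (y : ℝ → 𝔸) (hy : ∀ s, HasDerivAt y (v * y s) s)
    (h0 : y 0 = 0) (s : ℝ) : y s = 0 := by
  have hz : ∀ u : ℝ, HasDerivAt (fun r : ℝ => exp ((-r) • v) * y r) 0 u := by
    intro u
    have h1 : HasDerivAt (fun r : ℝ => exp ((-r) • v)) ((-1 : ℝ) • (v * exp ((-u) • v))) u := by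
      exact (hasDerivAt_exp_smul_const' v (-u)).scomp u (hasDerivAt_neg u)
    have h2 := h1.mul (hy u)
    have hc : Commute v (exp ((-u) • v)) := ((Commute.refl v).smul_right (-u)).exp_right
    refine h2.congr_deriv ?_
    symm
    have key : exp ((-u) • v) * (v * y u) = v * exp ((-u) • v) * y u := by
      rw [← mul_assoc, ← hc.eq]
    rw [key, neg_one_smul, neg_mul, neg_add_cancel]
  have hconst : (fun r : ℝ => exp ((-r) • v) * y r) s
      = (fun r : ℝ => exp ((-r) • v) * y r) 0 :=
    is_const_of_deriv_eq_zero (fun u => (hz u).differentiableAt) (fun u => (hz u).deriv) s 0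
  have h0' : exp ((-s) • v) * y s = 0 := by
    simpa [h0] using hconst
  have hinv : exp (s • v) * exp ((-s) • v) = 1 := by
    rw [← exp_add_of_commute (((Commute.refl v).smul_right (-s)).smul_left s)]
    simp
  calc y s = (exp (s • v) * exp ((-s) • v)) * y s := by rw [hinv, one_mul]
    _ = exp (s • v) * (exp ((-s) • v) * y s) := by rw [mul_assoc]
    _ = 0 := by rw [h0', mul_zero]

lemma aux_ode_unique (v c : 𝔸) (y z : ℝ → 𝔸)
    (hy : ∀ s, HasDerivAt y (v * y s + c * exp (s • v)) s)
    (hz : ∀ s, HasDerivAt z (v * z s + c * exp (s • v)) s)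
    (h0 : y 0 = z 0) (s : ℝ) : y s = z s := by
  have h := aux_ode_zero v (fun u => y u - z u) (fun u => by
    have h := (hy u).sub (hz u)
    refine h.congr_deriv ?_
    symm
    rw [mul_sub]
    abel) (by simp [h0]) s
  exact sub_eq_zero.mp h

end GenericODE

/-! ### Auxiliary lemmas: matrix-specific facts, proved with the `L∞` operator norm -/

section LinftyAux
attribute [-instance] Matrix.normedAddCommGroup Matrix.normedSpace
attribute [local instance] Matrix.linftyOpNormedAddCommGroup Matrix.linftyOpNormedSpace
  Matrix.linftyOpNormedRing Matrix.linftyOpNormedAlgebra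

variable {n : ℕ}


/-- A submatrix-picking continuous linear map. -/
noncomputable def tbCLM (n : ℕ) (p q : Fin n → Fin n ⊕ Fin n) :
    Matrix (Fin n ⊕ Fin n) (Fin n ⊕ Fin n) ℝ →L[ℝ] Matrix (Fin n) (Fin n) ℝ :=
  LinearMap.toContinuousLinearMap
    { toFun := fun X => X.submatrix p q
      map_add' := fun _ _ => rfl
      map_smul' := fun _ _ => rfl }

lemma tbCLM_apply (p q : Fin n → Fin n ⊕ Fin n)
    (X : Matrix (Fin n ⊕ Fin n) (Fin n ⊕ Fin n) ℝ) : tbCLM n p q X = X.submatrix p q := rfl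

lemma submatrix_inl_inr (X : Matrix (Fin n ⊕ Fin n) (Fin n ⊕ Fin n) ℝ) :
    X.submatrix Sum.inl Sum.inr = X.toBlocks₁₂ := rfl

lemma submatrix_inr_inl (X : Matrix (Fin n ⊕ Fin n) (Fin n ⊕ Fin n) ℝ) :
    X.submatrix Sum.inr Sum.inl = X.toBlocks₂₁ := rfl

lemma submatrix_inr_inr (X : Matrix (Fin n ⊕ Fin n) (Fin n ⊕ Fin n) ℝ) :
    X.submatrix Sum.inr Sum.inr = X.toBlocks₂₂ := rfl

lemma hasDerivAt_block (v w : Matrix (Fin n) (Fin n) ℝ) (p q : Fin n → Fin n ⊕ Fin n) (s : ℝ) :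
    HasDerivAt (fun u : ℝ => (exp (u • Matrix.fromBlocks v w 0 v)).submatrix p q)
      ((Matrix.fromBlocks v w 0 v * exp (s • Matrix.fromBlocks v w 0 v)).submatrix p q) s := by
  have hE := hasDerivAt_exp_smul_const' (Matrix.fromBlocks v w 0 v) s
  have := (tbCLM n p q).hasFDerivAt.comp_hasDerivAt s hE
  exact this

lemma exp_block_21 (v w : Matrix (Fin n) (Fin n) ℝ) (s : ℝ) :
    (exp (s • Matrix.fromBlocks v w 0 v)).toBlocks₂₁ = 0 := by
  apply aux_ode_zero v (fun u => (exp (u • Matrix.fromBlocks v w 0 v)).toBlocks₂₁)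
  · intro u
    have h := hasDerivAt_block v w Sum.inr Sum.inl u
    rw [submatrix_inr_inl] at h
    refine h.congr_deriv ?_
    symm
    conv_rhs => rw [← Matrix.fromBlocks_toBlocks (exp (u • Matrix.fromBlocks v w 0 v)),
      Matrix.fromBlocks_multiply]
    rw [Matrix.toBlocks_fromBlocks₂₁]
    simp
  · show (exp ((0:ℝ) • Matrix.fromBlocks v w 0 v)).toBlocks₂₁ = 0
    rw [zero_smul, exp_zero, ← Matrix.fromBlocks_one, Matrix.toBlocks_fromBlocks₂₁]

lemma exp_block_22 (v w : Matrix (Fin n) (Fin n) ℝ) (s : ℝ) :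
    (exp (s • Matrix.fromBlocks v w 0 v)).toBlocks₂₂ = exp (s • v) := by
  have h := aux_ode_zero v
    (fun u => (exp (u • Matrix.fromBlocks v w 0 v)).toBlocks₂₂ - exp (u • v)) ?_ ?_ s
  · exact sub_eq_zero.mp h
  · intro u
    have h1 := hasDerivAt_block v w Sum.inr Sum.inr u
    rw [submatrix_inr_inr] at h1
    have h2 := hasDerivAt_exp_smul_const' v u
    have h3 := h1.sub h2
    refine h3.congr_deriv ?_
    symm
    rw [mul_sub]
    congr 1
    conv_rhs => rw [← Matrix.fromBlocks_toBlocks (exp (u • Matrix.fromBlocks v w 0 v)),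
      Matrix.fromBlocks_multiply]
    rw [Matrix.toBlocks_fromBlocks₂₂]
    simp
  · show (exp ((0:ℝ) • Matrix.fromBlocks v w 0 v)).toBlocks₂₂ - exp ((0:ℝ) • v) = 0
    rw [zero_smul, zero_smul, exp_zero, exp_zero, ← Matrix.fromBlocks_one,
      Matrix.toBlocks_fromBlocks₂₂, sub_self]

lemma exp_block_12_deriv (v w : Matrix (Fin n) (Fin n) ℝ) (s : ℝ) :
    HasDerivAt (fun u : ℝ => (exp (u • Matrix.fromBlocks v w 0 v)).toBlocks₁₂)
      (v * (exp (s • Matrix.fromBlocks v w 0 v)).toBlocks₁₂ + w * exp (s • v)) s := by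
  have h := hasDerivAt_block v w Sum.inl Sum.inr s
  rw [submatrix_inl_inr] at h
  refine h.congr_deriv ?_
  symm
  conv_rhs => rw [← Matrix.fromBlocks_toBlocks (exp (s • Matrix.fromBlocks v w 0 v)),
    Matrix.fromBlocks_multiply]
  rw [Matrix.toBlocks_fromBlocks₁₂]
  rw [exp_block_22 v w s]

lemma group_prop_exp_eq (G : Set (Matrix (Fin n) (Fin n) ℝ))
    (f : Matrix (Fin n) (Fin n) ℝ → Matrix (Fin n) (Fin n) ℝ)
    (hf : LinearGroupProp G f) (v w : Matrix (Fin n) (Fin n) ℝ)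
    (hmem : ∀ r : ℝ, exp (r • v) ∈ G)
    (hd0 : Filter.Tendsto (slope (fun r : ℝ => f (exp (r • v))) 0)
      (nhdsWithin 0 {(0:ℝ)}ᶜ) (nhds w)) :
    f (exp v) = (exp (Matrix.fromBlocks v w 0 v)).toBlocks₁₂ := by
  have hd0' : HasDerivAt (fun r : ℝ => f (exp (r • v))) w 0 :=
    hasDerivAt_iff_tendsto_slope.mpr hd0
  have hpsi : ∀ s : ℝ, HasDerivAt (fun r : ℝ => f (exp (r • v)))
      (v * f (exp (s • v)) + w * exp (s • v)) s := by
    intro s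
    have heq : (fun r : ℝ => f (exp (r • v)))
        = fun u : ℝ => exp ((u - s) • v) * f (exp (s • v))
          + f (exp ((u - s) • v)) * exp (s • v) := by
      funext u
      have hc : Commute ((u - s) • v) (s • v) := ((Commute.refl v).smul_left _).smul_right _
      have hsplit : exp (u • v) = exp ((u - s) • v) * exp (s • v) := by
        rw [← Matrix.exp_add_of_commute _ _ hc, ← add_smul, sub_add_cancel]
      rw [hsplit, hf _ (hmem (u - s)) _ (hmem s), add_comm]
    rw [heq]
    have husub : HasDerivAt (fun u : ℝ => u - s) 1 s := (hasDerivAt_id s).sub_const s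
    have h1 : HasDerivAt (fun u : ℝ => f (exp ((u - s) • v))) w s := by
      exact HasDerivAt.comp_sub_const (f := fun r : ℝ => f (exp (r • v))) s s
        (by rw [sub_self]; exact hd0')
    have h2 : HasDerivAt (fun u : ℝ => exp ((u - s) • v)) v s := by
      have h0 : HasDerivAt (fun u : ℝ => exp ((u - s) • v)) (v * exp ((s - s) • v)) s := by
        exact HasDerivAt.comp_sub_const (f := fun r : ℝ => exp (r • v)) s s
          (hasDerivAt_exp_smul_const' v (s - s))
      simpa [sub_self, zero_smul, exp_zero] using h0
    exact (h2.mul_const (f (exp (s • v)))).add (h1.mul_const (exp (s • v)))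
  have hchi := fun s => exp_block_12_deriv (n := n) v w s
  have h0 : (fun r : ℝ => f (exp (r • v))) 0
      = (fun s : ℝ => (exp (s • Matrix.fromBlocks v w 0 v)).toBlocks₁₂) 0 := by
    have h1G : (1 : Matrix (Fin n) (Fin n) ℝ) ∈ G := by
      have := hmem 0
      rwa [zero_smul, exp_zero] at this
    have hf1 : f 1 = 0 := by
      have h := hf 1 h1G 1 h1G
      rw [mul_one, mul_one, one_mul] at h
      exact (left_eq_add.mp h)
    show f (exp ((0:ℝ) • v)) = (exp ((0:ℝ) • Matrix.fromBlocks v w 0 v)).toBlocks₁₂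
    rw [zero_smul, zero_smul, exp_zero, exp_zero, hf1, ← Matrix.fromBlocks_one,
      Matrix.toBlocks_fromBlocks₁₂]
  have := aux_ode_unique v w _ _ hpsi hchi h0 1
  simpa [one_smul] using this

/-- The block-diagonal embedding as an `ℝ`-algebra homomorphism. -/
noncomputable def blockDiagAlgHom (n : ℕ) :
    (Matrix (Fin n) (Fin n) ℝ × Matrix (Fin n) (Fin n) ℝ) →ₐ[ℝ]
      Matrix (Fin n ⊕ Fin n) (Fin n ⊕ Fin n) ℝ where
  toFun p := Matrix.fromBlocks p.1 0 0 p.2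
  map_one' := Matrix.fromBlocks_one
  map_mul' p q := by
    rw [Prod.fst_mul, Prod.snd_mul, Matrix.fromBlocks_multiply]
    simp
  map_zero' := by
    ext i j
    rcases i <;> rcases j <;> simp [Matrix.fromBlocks]
  map_add' p q := by
    rw [Prod.fst_add, Prod.snd_add, Matrix.fromBlocks_add]
    simp
  commutes' r := by
    have : (algebraMap ℝ (Matrix (Fin n) (Fin n) ℝ × Matrix (Fin n) (Fin n) ℝ) r)
        = (r • 1, r • 1) := by
      ext <;> simp [Algebra.algebraMap_eq_smul_one]
    rw [this]
    show Matrix.fromBlocks (r • 1) 0 0 (r • 1) = algebraMap ℝ _ r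
    rw [Algebra.algebraMap_eq_smul_one, ← Matrix.fromBlocks_one, Matrix.fromBlocks_smul,
      smul_zero]

lemma exp_fromBlocks_diag (a b : Matrix (Fin n) (Fin n) ℝ) :
    exp (Matrix.fromBlocks a 0 0 b) = Matrix.fromBlocks (exp a) 0 0 (exp b) := by
  have hcont : Continuous (blockDiagAlgHom n) :=
    (blockDiagAlgHom n).toLinearMap.continuous_of_finiteDimensional
  have h := map_exp (blockDiagAlgHom n) hcont (a, b)
  have hprod : exp ((a, b) : Matrix (Fin n) (Fin n) ℝ × Matrix (Fin n) (Fin n) ℝ)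
      = (exp a, exp b) := Prod.ext (Prod.fst_exp (a, b)) (Prod.snd_exp (a, b))
  erw [hprod] at h
  exact h.symm

lemma slope_exp_line (v w : Matrix (Fin n) (Fin n) ℝ) {s : ℝ} (hs : s ≠ 0) :
    slope (fun r : ℝ => exp (v + r • w)) 0 s
      = (exp (Matrix.fromBlocks (v + s • w) w 0 v)).toBlocks₁₂ := by
  have hTT : (Matrix.fromBlocks 1 ((-s⁻¹) • 1) 0 1 :
        Matrix (Fin n ⊕ Fin n) (Fin n ⊕ Fin n) ℝ) * Matrix.fromBlocks 1 (s⁻¹ • 1) 0 1 = 1 := by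
    rw [Matrix.fromBlocks_multiply, ← Matrix.fromBlocks_one]
    congr 1 <;> simp
  have hTT' : (Matrix.fromBlocks 1 (s⁻¹ • 1) 0 1 :
        Matrix (Fin n ⊕ Fin n) (Fin n ⊕ Fin n) ℝ) * Matrix.fromBlocks 1 ((-s⁻¹) • 1) 0 1 = 1 := by
    rw [Matrix.fromBlocks_multiply, ← Matrix.fromBlocks_one]
    congr 1 <;> simp
  set U : (Matrix (Fin n ⊕ Fin n) (Fin n ⊕ Fin n) ℝ)ˣ :=
    ⟨Matrix.fromBlocks 1 ((-s⁻¹) • 1) 0 1, Matrix.fromBlocks 1 (s⁻¹ • 1) 0 1, hTT, hTT'⟩ with hU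
  have hconj : Matrix.fromBlocks (v + s • w) w 0 v
      = Matrix.fromBlocks 1 ((-s⁻¹) • 1) 0 1 * Matrix.fromBlocks (v + s • w) 0 0 v *
        Matrix.fromBlocks 1 (s⁻¹ • 1) 0 1 := by
    rw [Matrix.fromBlocks_multiply, Matrix.fromBlocks_multiply]
    rw [Matrix.fromBlocks_inj]
    refine ⟨by simp, ?_, by simp, by simp⟩
    simp only [Matrix.smul_mul, Matrix.mul_smul, one_mul, mul_one, mul_zero, zero_mul,
      add_zero, zero_add, smul_zero, smul_add, smul_smul,
      inv_mul_cancel₀ hs, one_smul]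
    rw [neg_smul]
    abel
  have hexpc := Matrix.exp_units_conj U (Matrix.fromBlocks (v + s • w) 0 0 v)
  have hUc : (U : Matrix (Fin n ⊕ Fin n) (Fin n ⊕ Fin n) ℝ)
      = Matrix.fromBlocks 1 ((-s⁻¹) • 1) 0 1 := rfl
  have hUc' : ((U⁻¹ : (Matrix (Fin n ⊕ Fin n) (Fin n ⊕ Fin n) ℝ)ˣ) :
      Matrix (Fin n ⊕ Fin n) (Fin n ⊕ Fin n) ℝ) = Matrix.fromBlocks 1 (s⁻¹ • 1) 0 1 := rfl
  rw [hUc, hUc'] at hexpc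
  rw [hconj, hexpc, exp_fromBlocks_diag]
  rw [Matrix.fromBlocks_multiply, Matrix.fromBlocks_multiply, Matrix.toBlocks_fromBlocks₁₂]
  rw [slope_def_module]
  simp only [zero_smul, add_zero, sub_zero, one_mul, mul_one, zero_mul, mul_zero,
    zero_add, Matrix.mul_smul, Matrix.smul_mul, smul_zero, neg_smul]
  rw [smul_sub, sub_eq_add_neg, Matrix.neg_mul, Matrix.smul_mul, one_mul]

lemma exp_comp_slope (x : ℝ → Matrix (Fin n) (Fin n) ℝ) (t : ℝ) (w : Matrix (Fin n) (Fin n) ℝ)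
    (hx : Filter.Tendsto (slope x t) (nhdsWithin t {t}ᶜ) (nhds w)) :
    Filter.Tendsto (slope (fun s => exp (x s)) t) (nhdsWithin t {t}ᶜ)
      (nhds ((exp (Matrix.fromBlocks (x t) w 0 (x t))).toBlocks₁₂)) := by
  have hx' : HasDerivAt x w t := hasDerivAt_iff_tendsto_slope.mpr hx
  have hdiff : DifferentiableAt ℝ exp (x t) := (exp_analytic (x t)).differentiableAt
  have hline1 : HasDerivAt (fun s : ℝ => x t + s • w) w 0 := by
    exact (((hasDerivAt_id (0:ℝ)).smul_const w).const_add (x t)).congr_deriv (one_smul ℝ w)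
  have hline : HasDerivAt (fun s : ℝ => exp (x t + s • w)) (fderiv ℝ exp (x t) w) 0 := by
    have h0 : HasFDerivAt exp (fderiv ℝ exp (x t)) (x t + (0:ℝ) • w) := by
      simpa using hdiff.hasFDerivAt
    exact h0.comp_hasDerivAt 0 hline1
  have hlim : HasDerivAt (fun s : ℝ => exp (x t + s • w))
      ((exp (Matrix.fromBlocks (x t) w 0 (x t))).toBlocks₁₂) 0 := by
    refine hasDerivAt_iff_tendsto_slope.mpr ?_
    have hb : Continuous (fun s : ℝ => Matrix.fromBlocks (x t + s • w) w 0 (x t)) := by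
      apply Continuous.matrix_fromBlocks
      · exact continuous_const.add (continuous_id.smul continuous_const)
      · exact continuous_const
      · exact continuous_const
      · exact continuous_const
    have hcont : Continuous (fun s : ℝ =>
        (exp (Matrix.fromBlocks (x t + s • w) w 0 (x t))).toBlocks₁₂) :=
      (tbCLM n Sum.inl Sum.inr).continuous.comp (exp_continuous.comp hb)
    have h0 : Filter.Tendsto (fun s : ℝ =>
        (exp (Matrix.fromBlocks (x t + s • w) w 0 (x t))).toBlocks₁₂)
        (nhdsWithin 0 {(0:ℝ)}ᶜ)
        (nhds ((exp (Matrix.fromBlocks (x t) w 0 (x t))).toBlocks₁₂)) := by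
      have := (hcont.tendsto 0).mono_left (nhdsWithin_le_nhds (s := {(0:ℝ)}ᶜ))
      simpa using this
    refine Filter.Tendsto.congr' ?_ h0
    filter_upwards [self_mem_nhdsWithin] with s hs
    exact (slope_exp_line (x t) w hs).symm
  have hkey : fderiv ℝ exp (x t) w
      = (exp (Matrix.fromBlocks (x t) w 0 (x t))).toBlocks₁₂ := hline.unique hlim
  have hcomp : HasDerivAt (fun s => exp (x s)) (fderiv ℝ exp (x t) w) t :=
    hdiff.hasFDerivAt.comp_hasDerivAt t hx'
  rw [← hkey]
  exact hasDerivAt_iff_tendsto_slope.mp hcomp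

end LinftyAux

attribute [local instance] Matrix.normedAddCommGroup Matrix.normedSpace

theorem exp_of_linear_system_solves_group_system {n : ℕ} (hn : 0 < n)
    (G : Set (Matrix (Fin n) (Fin n) ℝ)) (hG : IsMatrixLieGroup G)
    (f : ℝ → Matrix (Fin n) (Fin n) ℝ → Matrix (Fin n) (Fin n) ℝ)
    (hf : ∀ t : ℝ, LinearGroupProp G (f t))
    (A : ℝ → Matrix (Fin n) (Fin n) ℝ →ₗ[ℝ] Matrix (Fin n) (Fin n) ℝ)
    (hA_preserve : ∀ t : ℝ, ∀ v ∈ lieAlgebraOf G, A t v ∈ lieAlgebraOf G)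
    (hA_diff : ∀ t : ℝ, (fun v => f t (exp v) - A t v)
      =o[nhdsWithin (0 : Matrix (Fin n) (Fin n) ℝ) (lieAlgebraOf G)] (fun v => v))
    (x : ℝ → Matrix (Fin n) (Fin n) ℝ)
    (hx_mem : ∀ t : ℝ, x t ∈ lieAlgebraOf G)
    (hx_deriv : ∀ t : ℝ, HasDerivAt x (A t (x t)) t) :
    ∀ t : ℝ, HasDerivAt (fun s => exp (x s)) (f t (exp (x t))) t := by
  intro t
  have hmem : ∀ r : ℝ, exp (r • x t) ∈ G := hx_mem t
  have hsmul_mem : ∀ r : ℝ, r • x t ∈ lieAlgebraOf G := by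
    intro r
    simp only [lieAlgebraOf, Set.mem_setOf_eq]
    intro u
    rw [smul_smul]
    exact hx_mem t (u * r)
  have h1G : (1 : Matrix (Fin n) (Fin n) ℝ) ∈ G := hG.one_mem
  have hf1 : f t 1 = 0 := by
    have h := hf t 1 h1G 1 h1G
    rw [mul_one, mul_one, one_mul] at h
    exact left_eq_add.mp h
  have hd0 : HasDerivAt (fun r : ℝ => f t (exp (r • x t))) (A t (x t)) 0 := by
    have htend : Filter.Tendsto (fun r : ℝ => r • x t) (nhds 0)
        (nhdsWithin 0 (lieAlgebraOf G)) := by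
      rw [tendsto_nhdsWithin_iff]
      constructor
      · have hc : Continuous (fun r : ℝ => r • x t) := continuous_id.smul continuous_const
        simpa using hc.tendsto 0
      · exact Filter.Eventually.of_forall hsmul_mem
    have h2 := (hA_diff t).comp_tendsto htend
    have h3 : (fun r : ℝ => r • x t) =O[nhds (0:ℝ)] (fun r : ℝ => r) := by
      refine Asymptotics.IsBigO.of_bound ‖x t‖ ?_
      filter_upwards with r
      rw [norm_smul, mul_comm, Real.norm_eq_abs]
    have h4 := h2.trans_isBigO h3
    refine hasDerivAt_iff_isLittleO.mpr ?_
    refine h4.congr' ?_ ?_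
    · apply Filter.Eventually.of_forall
      intro r
      show f t (exp (r • x t)) - A t (r • x t)
        = f t (exp (r • x t)) - f t (exp ((0:ℝ) • x t)) - (r - 0) • A t (x t)
      rw [map_smul, zero_smul, exp_zero, hf1, sub_zero, sub_zero]
    · exact Filter.Eventually.of_forall fun r => by simp
  have key : f t (exp (x t))
      = (exp (Matrix.fromBlocks (x t) (A t (x t)) 0 (x t))).toBlocks₁₂ :=
    group_prop_exp_eq G (f t) (hf t) (x t) (A t (x t)) hmem
      (hasDerivAt_iff_tendsto_slope.mp hd0)
  have hsx := hasDerivAt_iff_tendsto_slope.mp (hx_deriv t)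
  have hfin := exp_comp_slope x t (A t (x t)) hsx
  refine hasDerivAt_iff_tendsto_slope.mpr ?_
  rw [key]
  exact hfin
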